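/- arXiv:1808.05116 — 6 statements merged into one kernel-verified Lean document; each statement's English description precedes it below -/
import Mathlib

section
/- Let n be a positive integer and (a,b), (a',b') pairs of natural numbers with a+b ≡ a'+b' (mod 2), a ≥ a', and b ≥ b'. Let X_n denote the position after n steps of the simple random walk on ℤ² starting at the origin, where each of the four steps (±1,0), (0,±1) has probability 1/4. Then Pr[X_n = (a,b)] ≤ Pr[X_n = (a',b')]. -/
/-- The step set of the simple random walk on `ℤ²`. -/
def rwStep : Fin 4 → ℤ × ℤ := ![(1, 0), (-1, 0), (0, 1), (0, -1)]

/-- The probability that the simple random walk on `ℤ²` of length `n`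
(each of the four unit steps having probability `1/4`) ends at `v`. -/
noncomputable def rwProb (n : ℕ) (v : ℤ × ℤ) : ℝ :=
  ((Finset.univ.filter (fun f : Fin n → Fin 4 => ∑ i, rwStep (f i) = v)).card : ℝ) / 4 ^ n

open Finset

/-- Number of `±1` sequences of length `n` with sum `k`. -/
def rwW (n : ℕ) (k : ℤ) : ℕ :=
  (univ.filter (fun g : Fin n → Bool => ∑ i, (if g i then (1:ℤ) else -1) = k)).card

lemma rw_sum_sign_eq (n : ℕ) (g : Fin n → Bool) :
    ∑ i, (if g i then (1:ℤ) else -1)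
      = 2 * ((univ.filter (fun i => g i)).card : ℤ) - n := by
  have h : ∀ i : Fin n, (if g i then (1:ℤ) else -1)
      = 2 * (if g i then (1:ℤ) else 0) - 1 := by
    intro i; by_cases h : g i <;> simp [h]
  rw [Finset.sum_congr rfl (fun i _ => h i), Finset.sum_sub_distrib, ← Finset.mul_sum,
    Finset.sum_boole]
  simp

lemma rwW_eq (n m : ℕ) : rwW n (2 * (m:ℤ) - n) = n.choose m := by
  unfold rwW
  have h1 : (univ.filter (fun g : Fin n → Bool =>
        ∑ i, (if g i then (1:ℤ) else -1) = 2*(m:ℤ)-n))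
      = univ.filter (fun g : Fin n → Bool => (univ.filter (fun i => g i)).card = m) := by
    apply Finset.filter_congr; intro g _
    rw [rw_sum_sign_eq]
    constructor
    · intro h; omega
    · intro h; omega
  rw [h1]
  have h2 := Finset.card_powersetCard m (univ : Finset (Fin n))
  rw [Finset.card_univ, Fintype.card_fin] at h2
  rw [← h2]
  apply Finset.card_nbij' (fun g => univ.filter (fun i => g i = true))
    (fun s i => decide (i ∈ s))
  · intro g hg
    simp only [Finset.mem_coe, Finset.mem_filter, Finset.mem_univ, true_and] at hg
    simp [Finset.mem_powersetCard, hg]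
  · intro s hs
    simp only [Finset.mem_coe, Finset.mem_powersetCard] at hs
    simp only [Finset.mem_coe, Finset.mem_filter, Finset.mem_univ, true_and]
    simpa using hs.2
  · intro g hg
    funext i
    simp
  · intro s hs
    ext i
    simp

lemma rwW_zero (n : ℕ) (k : ℤ) (h : ∀ m : ℕ, k ≠ 2 * (m:ℤ) - n) : rwW n k = 0 := by
  unfold rwW
  rw [Finset.card_eq_zero, Finset.filter_eq_empty_iff]
  intro g _
  rw [rw_sum_sign_eq]
  exact fun hk => h _ hk.symm

lemma rwW_neg (n : ℕ) (k : ℤ) : rwW n k = rwW n (-k) := by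
  unfold rwW
  have hsum : ∀ g : Fin n → Bool,
      ∑ i, (if !g i then (1:ℤ) else -1) = -∑ i, (if g i then (1:ℤ) else -1) := by
    intro g
    rw [← Finset.sum_neg_distrib]
    apply Finset.sum_congr rfl
    intro i _
    by_cases h : g i <;> simp [h]
  apply Finset.card_nbij' (fun g i => !g i) (fun g i => !g i)
  · intro g hg
    simp only [Finset.mem_coe, Finset.mem_filter, Finset.mem_univ, true_and] at hg ⊢
    rw [hsum, hg]
  · intro g hg
    simp only [Finset.mem_coe, Finset.mem_filter, Finset.mem_univ, true_and] at hg ⊢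
    rw [hsum, hg]; ring
  · intro g _; funext i; simp
  · intro g _; funext i; simp

lemma rw_choose_identity (n m : ℕ) (hm : 1 ≤ m) :
    n.choose m * m = n.choose (m-1) * (n + 1 - m) := by
  obtain ⟨k, rfl⟩ : ∃ k, m = k + 1 := ⟨m - 1, by omega⟩
  rw [Nat.choose_succ_right_eq]
  congr 1
  omega

lemma rw_choose_mono (n m : ℕ) (h : n + 2 ≤ 2*m) : n.choose m ≤ n.choose (m-1) := by
  rcases le_or_gt m n with hmn | hmn
  · have hm : 1 ≤ m := by omega
    have hkey : n.choose m * m ≤ n.choose (m-1) * m := by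
      rw [rw_choose_identity n m hm]
      exact Nat.mul_le_mul_left _ (by omega)
    exact Nat.le_of_mul_le_mul_right hkey (by omega)
  · simp [Nat.choose_eq_zero_of_lt hmn]

lemma rw_choose_key (n m p : ℕ) (h : n + 2 ≤ m + p) :
    n.choose m * n.choose p ≤ n.choose (m-1) * n.choose (p-1) := by
  rcases lt_or_ge n m with hm | hm
  · simp [Nat.choose_eq_zero_of_lt hm]
  rcases lt_or_ge n p with hp | hp
  · simp [Nat.choose_eq_zero_of_lt hp]
  have hm1 : 1 ≤ m := by omega
  have hp1 : 1 ≤ p := by omega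
  have hb : (n+1-m) * (n+1-p) ≤ m * p := by
    have h1 : n + 1 - m ≤ p := by omega
    have h2 : n + 1 - p ≤ m := by omega
    calc (n+1-m) * (n+1-p) ≤ p * m := Nat.mul_le_mul h1 h2
      _ = m * p := Nat.mul_comm p m
  have hcalc : (n.choose m * n.choose p) * (m * p)
      ≤ (n.choose (m-1) * n.choose (p-1)) * (m * p) := by
    calc (n.choose m * n.choose p) * (m * p)
        = (n.choose m * m) * (n.choose p * p) := by ring
      _ = (n.choose (m-1) * (n+1-m)) * (n.choose (p-1) * (n+1-p)) := by
          rw [rw_choose_identity n m hm1, rw_choose_identity n p hp1]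
      _ = (n.choose (m-1) * n.choose (p-1)) * ((n+1-m) * (n+1-p)) := by ring
      _ ≤ (n.choose (m-1) * n.choose (p-1)) * (m * p) := Nat.mul_le_mul_left _ hb
  exact Nat.le_of_mul_le_mul_right hcalc (by positivity)

lemma rwW_step_diag (n : ℕ) (k : ℤ) (hk : 2 ≤ k) : rwW n k ≤ rwW n (k-2) := by
  by_cases h : ∃ m : ℕ, k = 2*(m:ℤ) - n
  · obtain ⟨m, rfl⟩ := h
    have hm1 : 1 ≤ m := by omega
    have e1 : 2*(m:ℤ) - n - 2 = 2*((m-1 : ℕ):ℤ) - n := by omega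
    rw [rwW_eq, e1, rwW_eq]
    exact rw_choose_mono n m (by omega)
  · push_neg at h
    rw [rwW_zero n k h]
    exact Nat.zero_le _

lemma rwW_step_pair (n : ℕ) (k l : ℤ) (h : 4 ≤ k + l) :
    rwW n k * rwW n l ≤ rwW n (k-2) * rwW n (l-2) := by
  by_cases hk : ∃ m : ℕ, k = 2*(m:ℤ) - n
  · obtain ⟨m, rfl⟩ := hk
    by_cases hl : ∃ p : ℕ, l = 2*(p:ℤ) - n
    · obtain ⟨p, rfl⟩ := hl
      rcases Nat.eq_zero_or_pos m with rfl | hm1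
      · have hp : n < p := by omega
        have hz : rwW n (2*(p:ℤ)-n) = 0 := by
          rw [rwW_eq]; exact Nat.choose_eq_zero_of_lt hp
        rw [hz]
        simp
      rcases Nat.eq_zero_or_pos p with rfl | hp1
      · have hm : n < m := by omega
        have hz : rwW n (2*(m:ℤ)-n) = 0 := by
          rw [rwW_eq]; exact Nat.choose_eq_zero_of_lt hm
        rw [hz]
        simp
      have e1 : 2*(m:ℤ) - n - 2 = 2*((m-1 : ℕ):ℤ) - n := by omega
      have e2 : 2*(p:ℤ) - n - 2 = 2*((p-1 : ℕ):ℤ) - n := by omega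
      rw [e1, e2, rwW_eq, rwW_eq, rwW_eq, rwW_eq]
      exact rw_choose_key n m p (by omega)
    · push_neg at hl
      rw [rwW_zero n l hl]
      simp
  · push_neg at hk
    rw [rwW_zero n k hk]
    simp

lemma rwW_step_pair' (n : ℕ) (k l : ℤ) (h : 4 ≤ k - l) :
    rwW n k * rwW n l ≤ rwW n (k-2) * rwW n (l+2) := by
  rw [rwW_neg n l, rwW_neg n (l+2)]
  have e : -(l+2) = (-l) - 2 := by ring
  rw [e]
  exact rwW_step_pair n k (-l) (by omega)

lemma rw_main_count (n : ℕ) : ∀ N a b a' b' : ℕ, a + b ≤ N →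
    (a + b) % 2 = (a' + b') % 2 → a' ≤ a → b' ≤ b →
    rwW n ((a:ℤ) + b) * rwW n ((a:ℤ) - b) ≤ rwW n ((a':ℤ) + b') * rwW n ((a':ℤ) - b') := by
  intro N
  induction N with
  | zero =>
    intro a b a' b' hN hpar ha hb
    have h1 : a = a' := by omega
    have h2 : b = b' := by omega
    subst h1; subst h2; exact le_rfl
  | succ N ih =>
    intro a b a' b' hN hpar ha hb
    rcases Nat.lt_or_ge a' a with hlt | hge
    · rcases Nat.lt_or_ge b' b with hbl | hbg
      · -- diagonal step to (a-1, b-1)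
        have e1 : ((a-1:ℕ):ℤ) + ((b-1:ℕ):ℤ) = ((a:ℤ)+b) - 2 := by omega
        have e2 : ((a-1:ℕ):ℤ) - ((b-1:ℕ):ℤ) = (a:ℤ)-b := by omega
        have h1 : rwW n ((a:ℤ)+b) * rwW n ((a:ℤ)-b)
            ≤ rwW n (((a-1:ℕ):ℤ) + ((b-1:ℕ):ℤ)) * rwW n (((a-1:ℕ):ℤ) - ((b-1:ℕ):ℤ)) := by
          rw [e1, e2]
          exact Nat.mul_le_mul_right _ (rwW_step_diag n _ (by omega))
        exact le_trans h1 (ih (a-1) (b-1) a' b' (by omega) (by omega) (by omega) (by omega))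
      · -- b = b', a ≥ a' + 2 (by parity); step to (a-2, b)
        have hb2 : b = b' := by omega
        have ha2 : a' + 2 ≤ a := by omega
        have e1 : ((a-2:ℕ):ℤ) + b = ((a:ℤ)+b) - 2 := by omega
        have e2 : ((a-2:ℕ):ℤ) - b = ((a:ℤ)-b) - 2 := by omega
        have h1 : rwW n ((a:ℤ)+b) * rwW n ((a:ℤ)-b)
            ≤ rwW n (((a-2:ℕ):ℤ) + b) * rwW n (((a-2:ℕ):ℤ) - b) := by
          rw [e1, e2]
          exact rwW_step_pair n _ _ (by omega)
        exact le_trans h1 (ih (a-2) b a' b' (by omega) (by omega) (by omega) hb)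
    · have ha2 : a = a' := by omega
      rcases Nat.lt_or_ge b' b with hbl | hbg
      · -- a = a', b ≥ b' + 2; step to (a, b-2)
        have hb2 : b' + 2 ≤ b := by omega
        have e1 : (a:ℤ) + ((b-2:ℕ):ℤ) = ((a:ℤ)+b) - 2 := by omega
        have e2 : (a:ℤ) - ((b-2:ℕ):ℤ) = ((a:ℤ)-b) + 2 := by omega
        have h1 : rwW n ((a:ℤ)+b) * rwW n ((a:ℤ)-b)
            ≤ rwW n ((a:ℤ) + ((b-2:ℕ):ℤ)) * rwW n ((a:ℤ) - ((b-2:ℕ):ℤ)) := by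
          rw [e1, e2]
          exact rwW_step_pair' n _ _ (by omega)
        exact le_trans h1 (ih a (b-2) a' b' (by omega) (by omega) (by omega) (by omega))
      · have hb2 : b = b' := by omega
        subst ha2; subst hb2; exact le_rfl

/-- The rotation identification `Fin 4 ≃ Bool × Bool`. -/
def rwE4 : Fin 4 ≃ Bool × Bool where
  toFun := ![(true, true), (false, false), (true, false), (false, true)]
  invFun c := if c.1 then (if c.2 then 0 else 2) else (if c.2 then 3 else 1)
  left_inv := by decide
  right_inv := by decide

lemma rwStep_fst_add_snd : ∀ s : Fin 4,
    (rwStep s).1 + (rwStep s).2 = (if (rwE4 s).1 then (1:ℤ) else -1) := by decide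

lemma rwStep_fst_sub_snd : ∀ s : Fin 4,
    (rwStep s).1 - (rwStep s).2 = (if (rwE4 s).2 then (1:ℤ) else -1) := by decide

lemma rw_count_eq (n : ℕ) (a b : ℤ) :
    (univ.filter (fun f : Fin n → Fin 4 => ∑ i, rwStep (f i) = (a, b))).card
      = rwW n (a + b) * rwW n (a - b) := by
  have key : ∀ f : Fin n → Fin 4,
      (∑ i, rwStep (f i) = (a, b)) ↔
      ((∑ i, (if (rwE4 (f i)).1 then (1:ℤ) else -1) = a + b) ∧
       (∑ i, (if (rwE4 (f i)).2 then (1:ℤ) else -1) = a - b)) := by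
    intro f
    have e1 : ∑ i, (if (rwE4 (f i)).1 then (1:ℤ) else -1)
        = (∑ i, (rwStep (f i)).1) + (∑ i, (rwStep (f i)).2) := by
      rw [← Finset.sum_add_distrib]
      exact Finset.sum_congr rfl fun i _ => (rwStep_fst_add_snd (f i)).symm
    have e2 : ∑ i, (if (rwE4 (f i)).2 then (1:ℤ) else -1)
        = (∑ i, (rwStep (f i)).1) - (∑ i, (rwStep (f i)).2) := by
      rw [← Finset.sum_sub_distrib]
      exact Finset.sum_congr rfl fun i _ => (rwStep_fst_sub_snd (f i)).symm
    rw [Prod.ext_iff, Prod.fst_sum, Prod.snd_sum, e1, e2]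
    constructor
    · rintro ⟨h1, h2⟩; omega
    · rintro ⟨h1, h2⟩; omega
  have h1 : {f : Fin n → Fin 4 // ∑ i, rwStep (f i) = (a, b)} ≃
      {g : Fin n → Bool // ∑ i, (if g i then (1:ℤ) else -1) = a + b} ×
      {h : Fin n → Bool // ∑ i, (if h i then (1:ℤ) else -1) = a - b} :=
    (Equiv.subtypeEquiv ((Equiv.arrowCongr (Equiv.refl (Fin n)) rwE4).trans
        (Equiv.arrowProdEquivProdArrow (Fin n) (fun _ => Bool) (fun _ => Bool))) (fun f => key f)).trans
      Equiv.subtypeProdEquivProd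
  calc (univ.filter (fun f : Fin n → Fin 4 => ∑ i, rwStep (f i) = (a, b))).card
      = Fintype.card {f : Fin n → Fin 4 // ∑ i, rwStep (f i) = (a, b)} :=
        (Fintype.card_subtype _).symm
    _ = Fintype.card ({g : Fin n → Bool // ∑ i, (if g i then (1:ℤ) else -1) = a + b} ×
        {h : Fin n → Bool // ∑ i, (if h i then (1:ℤ) else -1) = a - b}) :=
        Fintype.card_congr h1
    _ = rwW n (a + b) * rwW n (a - b) := by
        rw [Fintype.card_prod, Fintype.card_subtype, Fintype.card_subtype]
        rfl

theorem stmt0 (n : ℕ) (hn : 0 < n) (a b a' b' : ℕ)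
    (hpar : (a + b) % 2 = (a' + b') % 2) (ha : a' ≤ a) (hb : b' ≤ b) :
    rwProb n ((a : ℤ), (b : ℤ)) ≤ rwProb n ((a' : ℤ), (b' : ℤ)) := by
  unfold rwProb
  have hcard : (Finset.univ.filter
        (fun f : Fin n → Fin 4 => ∑ i, rwStep (f i) = ((a:ℤ), (b:ℤ)))).card
      ≤ (Finset.univ.filter
        (fun f : Fin n → Fin 4 => ∑ i, rwStep (f i) = ((a':ℤ), (b':ℤ)))).card := by
    rw [rw_count_eq, rw_count_eq]
    exact rw_main_count n (a+b) a b a' b' le_rfl hpar ha hb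
  gcongr
end

section
/- Let n be a positive integer and (a,b), (a',b') pairs of natural numbers with a+b = a'+b' and |a-b| ≥ |a'-b'|. Let X_n denote the position after n steps of the simple random walk on ℤ² starting at the origin. Then Pr[X_n = (a,b)] ≤ Pr[X_n = (a',b')]. -/
/-- Count of ±1 walks of length n ending at k. -/
noncomputable def N1 (n : ℕ) (k : ℤ) : ℕ :=
  (Finset.univ.filter (fun g : Fin n → Bool => ∑ i, (if g i then (1:ℤ) else -1) = k)).card

lemma sum_pm (n : ℕ) (g : Fin n → Bool) :
    ∑ i, (if g i then (1:ℤ) else -1) = 2 * (Finset.univ.filter (fun i => g i)).card - n := by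
  classical
  rw [Finset.sum_ite (f := fun _ => (1:ℤ)) (g := fun _ => (-1:ℤ))]
  simp only [Finset.sum_const, nsmul_eq_mul, mul_one, mul_neg_one]
  have h := Finset.card_filter_add_card_filter_not
    (s := (Finset.univ : Finset (Fin n))) (p := fun i => g i = true)
  simp only [Finset.card_univ, Fintype.card_fin] at h
  push_cast
  have : ((Finset.univ.filter (fun i => ¬ g i = true)).card : ℤ)
      = n - (Finset.univ.filter (fun i => g i = true)).card := by
    omega
  rw [this]; ring

lemma N1_eq_choose (n p : ℕ) (hp : p ≤ n) : N1 n (2 * p - n) = n.choose p := by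
  classical
  unfold N1
  have hcond : ∀ g : Fin n → Bool,
      (∑ i, (if g i then (1:ℤ) else -1) = 2 * p - n) ↔
      (Finset.univ.filter (fun i => g i)).card = p := by
    intro g
    rw [sum_pm]
    constructor
    · intro h; omega
    · intro h; rw [h]
  have : (Finset.univ.filter (fun g : Fin n → Bool =>
      ∑ i, (if g i then (1:ℤ) else -1) = 2 * p - n)) =
      (Finset.univ.filter (fun g : Fin n → Bool =>
      (Finset.univ.filter (fun i => g i)).card = p)) := by
    apply Finset.filter_congr; intro g _; simp [hcond g]
  rw [this]
  rw [show n.choose p = ((Finset.univ : Finset (Fin n)).powersetCard p).card from by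
    simp [Finset.card_powersetCard]]
  apply Finset.card_bij (fun g _ => Finset.univ.filter (fun i => g i = true))
  · intro g hg
    simp only [Finset.mem_filter, Finset.mem_univ, true_and] at hg
    simp [Finset.mem_powersetCard, hg]
  · intro g hg g' hg' h
    funext i
    have := Finset.ext_iff.mp h i
    simp only [Finset.mem_filter, Finset.mem_univ, true_and] at this
    by_cases hgi : g i <;> by_cases hgi' : g' i <;> simp_all
  · intro S hS
    simp only [Finset.mem_powersetCard] at hS
    refine ⟨fun i => i ∈ S, ?_, ?_⟩
    · simp only [Finset.mem_filter, Finset.mem_univ, true_and]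
      rw [← hS.2]; congr 1; ext i; simp
    · ext i; simp

lemma N1_ne_zero (n : ℕ) (k : ℤ) (h : N1 n k ≠ 0) : ∃ p : ℕ, p ≤ n ∧ k = 2 * p - n := by
  classical
  unfold N1 at h
  rw [Finset.card_ne_zero] at h
  obtain ⟨g, hg⟩ := h.exists_mem
  simp only [Finset.mem_filter, Finset.mem_univ, true_and] at hg
  rw [sum_pm] at hg
  refine ⟨(Finset.univ.filter (fun i => g i)).card, ?_, hg.symm⟩
  calc (Finset.univ.filter (fun i => g i)).card ≤ (Finset.univ : Finset (Fin n)).card :=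
    Finset.card_filter_le _ _
  _ = n := by simp

lemma N1_neg (n : ℕ) (k : ℤ) : N1 n (-k) = N1 n k := by
  classical
  unfold N1
  apply Finset.card_bij (fun g _ => fun i => ! g i)
  · intro g hg
    simp only [Finset.mem_filter, Finset.mem_univ, true_and] at hg ⊢
    rw [← neg_eq_iff_eq_neg] at hg
    rw [← hg, ← Finset.sum_neg_distrib]
    apply Finset.sum_congr rfl
    intro i _; by_cases h : g i <;> simp [h]
  · intro g _ g' _ h
    funext i
    have := congrFun h i
    by_cases h1 : g i <;> by_cases h2 : g' i <;> simp_all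
  · intro g hg
    refine ⟨fun i => ! g i, ?_, by funext i; simp⟩
    simp only [Finset.mem_filter, Finset.mem_univ, true_and] at hg ⊢
    rw [← neg_eq_iff_eq_neg, ← hg, ← Finset.sum_neg_distrib]
    exact Finset.sum_congr rfl (fun i _ => by by_cases h : g i <;> simp [h])


def rwE : Fin 4 → Bool × Bool := ![(true, true), (false, false), (true, false), (false, true)]

def rwEinv : Bool × Bool → Fin 4 := fun p =>
  match p with
  | (true, true) => 0
  | (false, false) => 1
  | (true, false) => 2
  | (false, true) => 3

lemma rwE_left : ∀ c, rwEinv (rwE c) = c := by decide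
lemma rwE_right : ∀ p, rwE (rwEinv p) = p := by decide

lemma step_sum (c : Fin 4) :
    (rwStep c).1 + (rwStep c).2 = (if (rwE c).1 then (1:ℤ) else -1) := by
  fin_cases c <;> simp [rwStep, rwE]

lemma step_diff (c : Fin 4) :
    (rwStep c).1 - (rwStep c).2 = (if (rwE c).2 then (1:ℤ) else -1) := by
  fin_cases c <;> simp [rwStep, rwE]

lemma factor (n : ℕ) (v : ℤ × ℤ) :
    (Finset.univ.filter (fun f : Fin n → Fin 4 => ∑ i, rwStep (f i) = v)).card =
    N1 n (v.1 + v.2) * N1 n (v.1 - v.2) := by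
  classical
  unfold N1
  rw [← Finset.card_product]
  apply Finset.card_bij'
    (fun f _ => (fun i => (rwE (f i)).1, fun i => (rwE (f i)).2))
    (fun g _ => fun i => rwEinv (g.1 i, g.2 i))
  · intro f hf
    simp only [Finset.mem_filter, Finset.mem_univ, true_and] at hf
    have h1 : ∑ i, (rwStep (f i)).1 = v.1 := by rw [← Prod.fst_sum, hf]
    have h2 : ∑ i, (rwStep (f i)).2 = v.2 := by rw [← Prod.snd_sum, hf]
    simp only [Finset.mem_product, Finset.mem_filter, Finset.mem_univ, true_and]
    constructor
    · rw [← h1, ← h2, ← Finset.sum_add_distrib]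
      exact Finset.sum_congr rfl (fun i _ => (step_sum (f i)).symm)
    · rw [← h1, ← h2, ← Finset.sum_sub_distrib]
      exact Finset.sum_congr rfl (fun i _ => (step_diff (f i)).symm)
  · intro g hg
    simp only [Finset.mem_product, Finset.mem_filter, Finset.mem_univ, true_and] at hg
    obtain ⟨h1, h2⟩ := hg
    simp only [Finset.mem_filter, Finset.mem_univ, true_and]
    have e1 : ∑ i, ((rwStep (rwEinv (g.1 i, g.2 i))).1 + (rwStep (rwEinv (g.1 i, g.2 i))).2)
        = v.1 + v.2 := by
      rw [← h1]
      refine Finset.sum_congr rfl (fun i _ => ?_)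
      rw [step_sum, rwE_right]
    have e2 : ∑ i, ((rwStep (rwEinv (g.1 i, g.2 i))).1 - (rwStep (rwEinv (g.1 i, g.2 i))).2)
        = v.1 - v.2 := by
      rw [← h2]
      refine Finset.sum_congr rfl (fun i _ => ?_)
      rw [step_diff, rwE_right]
    rw [Finset.sum_add_distrib] at e1
    rw [Finset.sum_sub_distrib] at e2
    apply Prod.ext
    · rw [Prod.fst_sum]; omega
    · rw [Prod.snd_sum]; omega
  · intro f _; funext i; rw [rwE_left]
  · intro g _; simp only [rwE_right]

lemma choose_mono_le_half (n : ℕ) : ∀ i j : ℕ, i ≤ j → j ≤ n / 2 → n.choose i ≤ n.choose j := by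
  intro i j hij
  induction j, hij using Nat.le_induction with
  | base => intro _; exact le_refl _
  | succ j hj ih =>
    intro hj2
    exact (ih (by omega)).trans (Nat.choose_le_succ_of_lt_half_left (by omega))

lemma N1_mono (n : ℕ) (d d' : ℕ) (hle : d' ≤ d) (hpar : d % 2 = d' % 2) :
    N1 n (d : ℤ) ≤ N1 n (d' : ℤ) := by
  by_cases h0 : N1 n (d : ℤ) = 0
  · omega
  · obtain ⟨p, hp, hpd⟩ := N1_ne_zero n _ h0
    obtain ⟨p', hp'p, hp', hnp'⟩ : ∃ p' : ℕ, p' ≤ p ∧ (d' : ℤ) = 2 * p' - n ∧ n ≤ 2 * p' := by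
      refine ⟨p - (d - d') / 2, by omega, by omega, by omega⟩
    rw [hpd, hp', N1_eq_choose n p hp, N1_eq_choose n p' (by omega)]
    rw [← Nat.choose_symm hp, ← Nat.choose_symm (show p' ≤ n by omega)]
    exact choose_mono_le_half n (n - p) (n - p') (by omega) (by omega)

lemma N1_abs (n : ℕ) (k : ℤ) : N1 n k = N1 n (k.natAbs : ℤ) := by
  rcases Int.natAbs_eq k with h | h
  · nth_rewrite 1 [h]; rfl
  · nth_rewrite 1 [h]; exact N1_neg n _

theorem stmt1 (n : ℕ) (hn : 0 < n) (a b a' b' : ℕ)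
    (hsum : a + b = a' + b') (habs : |(a' : ℤ) - (b' : ℤ)| ≤ |(a : ℤ) - (b : ℤ)|) :
    rwProb n ((a : ℤ), (b : ℤ)) ≤ rwProb n ((a' : ℤ), (b' : ℤ)) := by
  unfold rwProb
  have hf1 := factor n ((a : ℤ), (b : ℤ))
  have hf2 := factor n ((a' : ℤ), (b' : ℤ))
  simp only at hf1 hf2
  rw [hf1, hf2]
  have hsumz : (a : ℤ) + b = (a' : ℤ) + b' := by exact_mod_cast congrArg (Nat.cast : ℕ → ℤ) hsum
  rw [hsumz]
  have h2 : N1 n ((a : ℤ) - b) ≤ N1 n ((a' : ℤ) - b') := by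
    rw [N1_abs n ((a : ℤ) - b), N1_abs n ((a' : ℤ) - b')]
    apply N1_mono
    · rw [Int.abs_eq_natAbs, Int.abs_eq_natAbs] at habs
      exact_mod_cast habs
    · clear hf1 hf2
      omega
  have h4 : (0 : ℝ) < 4 ^ n := by positivity
  gcongr
end

section
/- Let w be an element of the free group F_d on generators x_1,...,x_d whose image in the abelianization ℤ^d is a primitive vector (i.e., the gcd of its coordinates is 1). Then for every group G, the word map w: G^d → G induced by substitution is surjective. -/
/-- The exponent sum of the generator `x i` in a word `w` of the free group,
i.e. the `i`-th coordinate of the image of `w` in the abelianization `ℤ^d`. -/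
def expSum {d : ℕ} (i : Fin d) (w : FreeGroup (Fin d)) : ℤ :=
  Multiplicative.toAdd
    ((FreeGroup.lift fun j => Multiplicative.ofAdd (if j = i then (1 : ℤ) else 0)) w)

lemma expSum_one {d : ℕ} (i : Fin d) : expSum i (1 : FreeGroup (Fin d)) = 0 := by
  simp [expSum]

lemma expSum_of {d : ℕ} (i j : Fin d) :
    expSum i (FreeGroup.of j) = if j = i then (1 : ℤ) else 0 := by
  simp [expSum]

lemma expSum_mul {d : ℕ} (i : Fin d) (x y : FreeGroup (Fin d)) :
    expSum i (x * y) = expSum i x + expSum i y := by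
  simp [expSum]

lemma expSum_inv {d : ℕ} (i : Fin d) (x : FreeGroup (Fin d)) :
    expSum i x⁻¹ = - expSum i x := by
  simp [expSum]

lemma bezout {ι : Type*} [DecidableEq ι] (s : Finset ι) (f : ι → ℤ) :
    ∃ a : ι → ℤ, ∑ i ∈ s, a i * f i = s.gcd f := by
  classical
  induction s using Finset.induction_on with
  | empty => exact ⟨0, by simp⟩
  | @insert i s hi ih =>
    obtain ⟨a, ha⟩ := ih
    refine ⟨fun j => if j = i then Int.gcdA (f i) (s.gcd f)
      else Int.gcdB (f i) (s.gcd f) * a j, ?_⟩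
    rw [Finset.sum_insert hi, Finset.gcd_insert]
    have : ∑ j ∈ s, (if j = i then Int.gcdA (f i) (s.gcd f)
        else Int.gcdB (f i) (s.gcd f) * a j) * f j
        = Int.gcdB (f i) (s.gcd f) * ∑ j ∈ s, a j * f j := by
      rw [Finset.mul_sum]
      refine Finset.sum_congr rfl fun j hj => ?_
      rw [if_neg (by rintro rfl; exact hi hj), mul_assoc]
    beta_reduce; rw [if_pos rfl, this, ha]
    have hg := Int.gcd_eq_gcd_ab (f i) (s.gcd f)
    have : (GCDMonoid.gcd (f i) (s.gcd f) : ℤ) = ↑(Int.gcd (f i) (s.gcd f)) :=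
      (Int.coe_gcd _ _).symm
    rw [this, hg]
    ring

lemma lift_pow {d : ℕ} {G : Type*} [Group G] (h : G) (a : Fin d → ℤ)
    (w : FreeGroup (Fin d)) :
    (FreeGroup.lift fun j => h ^ a j) w = h ^ (∑ i, a i * expSum i w) := by
  induction w using FreeGroup.induction_on with
  | C1 => rw [map_one]; simp [expSum_one]
  | of j =>
    show (FreeGroup.lift fun j => h ^ a j) (FreeGroup.of j)
      = h ^ ∑ i, a i * expSum i (FreeGroup.of j)
    rw [FreeGroup.lift_apply_of]
    simp [expSum_of, mul_ite, Finset.sum_ite_eq]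
  | inv_of j ihj =>
    simp only [map_inv, ihj, expSum_inv]
    rw [← zpow_neg]
    congr 1
    simp [Finset.sum_neg_distrib]
  | mul x y ihx ihy =>
    simp only [map_mul, ihx, ihy, expSum_mul, mul_add, Finset.sum_add_distrib]
    rw [zpow_add]

theorem stmt3 (d : ℕ) (w : FreeGroup (Fin d))
    (hw : Finset.univ.gcd (fun i => expSum i w) = 1) :
    ∀ (G : Type*) [Group G],
      Function.Surjective (fun g : Fin d → G => (FreeGroup.lift g) w) := by
  intro G _ h
  obtain ⟨a, ha⟩ := bezout Finset.univ (fun i => expSum i w)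
  rw [hw] at ha
  refine ⟨fun j => h ^ a j, ?_⟩
  simp only [lift_pow, ha, zpow_one]
end

section
/- Let G be a finite group, Z a central subgroup of G, and h ∈ G with image g ∈ G/Z. Then |C_{G/Z}(g)| ≤ |C_G(h)|, where C denotes the centralizer. -/
private theorem aux_comm {H : Type*} [Group H] (a b : H) :
    a * b * a⁻¹ * b⁻¹ = 1 ↔ b * a = a * b := by
  have e : a * b * a⁻¹ * b⁻¹ = (a * b) * (b * a)⁻¹ := by group
  rw [e, mul_inv_eq_one]
  exact ⟨fun e => e.symm, fun e => e.symm⟩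

theorem stmt5 (G : Type*) [Group G] [Finite G] (Z : Subgroup G) [Z.Normal]
    (hZ : Z ≤ Subgroup.center G) (h : G) :
    Nat.card (Subgroup.centralizer ({(h : G ⧸ Z)} : Set (G ⧸ Z))) ≤
      Nat.card (Subgroup.centralizer ({h} : Set G)) := by
  classical
  set cg := Subgroup.centralizer ({(h : G ⧸ Z)} : Set (G ⧸ Z)) with hcg
  set K : Subgroup G := cg.comap (QuotientGroup.mk' Z) with hK
  -- membership in K means the commutator lies in Z
  have hmemK : ∀ x : G, x ∈ K ↔ x * h * x⁻¹ * h⁻¹ ∈ Z := by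
    intro x
    rw [hK, Subgroup.mem_comap, hcg, Subgroup.mem_centralizer_singleton_iff,
      ← QuotientGroup.eq_one_iff (x * h * x⁻¹ * h⁻¹)]
    simp only [QuotientGroup.mk_mul, QuotientGroup.mk_inv, QuotientGroup.mk'_apply]
    rw [aux_comm]
    exact ⟨fun e => e.symm, fun e => e.symm⟩
  have hcm : ∀ x : K, (x : G) * h * (x : G)⁻¹ * h⁻¹ ∈ Z := fun x => (hmemK x).mp x.2
  -- the commutator homomorphism K →* Z
  let c : K →* Z :=
    { toFun := fun x => ⟨(x : G) * h * (x : G)⁻¹ * h⁻¹, hcm x⟩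
      map_one' := by ext; simp
      map_mul' := by
        intro x y
        ext
        push_cast
        set a := (x : G)
        set b := (y : G)
        have hy' := Subgroup.mem_center_iff.mp (hZ (hcm y))
        conv_rhs => rw [hy' (a * h * a⁻¹ * h⁻¹)]
        have l1 : a * b * h * (a * b)⁻¹ * h⁻¹
            = a * (b * h * b⁻¹ * h⁻¹) * (h * a⁻¹ * h⁻¹) := by group
        rw [l1, hy' a]
        group }
  have hch_le : Subgroup.centralizer ({h} : Set G) ≤ K := by
    intro x hx
    rw [Subgroup.mem_centralizer_singleton_iff] at hx
    rw [hmemK, (aux_comm x h).mpr hx.symm]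
    exact Z.one_mem
  have hker : c.ker = (Subgroup.centralizer ({h} : Set G)).subgroupOf K := by
    ext x
    simp only [MonoidHom.mem_ker, Subgroup.mem_subgroupOf,
      Subgroup.mem_centralizer_singleton_iff, Subtype.ext_iff, OneMemClass.coe_one]
    change (x : G) * h * (x : G)⁻¹ * h⁻¹ = 1 ↔ (x : G) * h = h * (x : G)
    rw [aux_comm]
    exact ⟨fun e => e.symm, fun e => e.symm⟩
  -- restriction of the quotient map to K
  let π : K →* G ⧸ Z := (QuotientGroup.mk' Z).domRestrict K
  have hπrange : π.range = cg := by
    have hmap : π.range = K.map (QuotientGroup.mk' Z) := by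
      ext y
      simp only [MonoidHom.mem_range, Subgroup.mem_map, MonoidHom.restrict_apply, π]
      constructor
      · rintro ⟨⟨x, hx⟩, rfl⟩; exact ⟨x, hx, rfl⟩
      · rintro ⟨x, hx, rfl⟩; exact ⟨⟨x, hx⟩, rfl⟩
    rw [hmap, hK, Subgroup.map_comap_eq_self_of_surjective
      (QuotientGroup.mk'_surjective Z)]
  have hπker : π.ker = Z.subgroupOf K := by
    ext x
    simp [π, MonoidHom.mem_ker, MonoidHom.restrict_apply, Subgroup.mem_subgroupOf,
      QuotientGroup.eq_one_iff]
  have h1 : Nat.card K = Nat.card π.range * Nat.card π.ker := by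
    rw [Subgroup.card_eq_card_quotient_mul_card_subgroup π.ker]
    congr 1
    exact Nat.card_congr (QuotientGroup.quotientKerEquivRange π).toEquiv
  have h2 : Nat.card K = Nat.card c.range * Nat.card c.ker := by
    rw [Subgroup.card_eq_card_quotient_mul_card_subgroup c.ker]
    congr 1
    exact Nat.card_congr (QuotientGroup.quotientKerEquivRange c).toEquiv
  have hZsub : Nat.card (Z.subgroupOf K) = Nat.card Z := by
    have hZle : Z ≤ K := le_trans (fun z hz => by
      rw [Subgroup.mem_centralizer_singleton_iff]
      exact (Subgroup.mem_center_iff.mp (hZ hz) h).symm) hch_le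
    exact Nat.card_congr (Subgroup.subgroupOfEquivOfLe hZle).toEquiv
  have hchsub : Nat.card ((Subgroup.centralizer ({h} : Set G)).subgroupOf K)
      = Nat.card (Subgroup.centralizer ({h} : Set G)) :=
    Nat.card_congr (Subgroup.subgroupOfEquivOfLe hch_le).toEquiv
  have hrange_le : Nat.card c.range ≤ Nat.card Z :=
    Subgroup.card_le_card_group c.range
  have hZpos : 0 < Nat.card Z := Nat.card_pos
  have key : Nat.card cg * Nat.card Z ≤
      Nat.card (Subgroup.centralizer ({h} : Set G)) * Nat.card Z := by
    calc Nat.card cg * Nat.card Z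
        = Nat.card π.range * Nat.card π.ker := by rw [hπrange, hπker, hZsub]
      _ = Nat.card c.range * Nat.card c.ker := by rw [← h1, h2]
      _ ≤ Nat.card Z * Nat.card c.ker := Nat.mul_le_mul_right _ hrange_le
      _ = Nat.card (Subgroup.centralizer ({h} : Set G)) * Nat.card Z := by
          rw [hker, hchsub, Nat.mul_comm]
  exact Nat.le_of_mul_le_mul_right key hZpos
end

section
/- Let F be a finite field, n a positive integer, g ∈ GL_n(F), and δ > 0. If the centralizer of g in GL_n(F) has order greater than |F|^{2δn²}, then there exists a monic irreducible polynomial P ∈ F[x] and an eigenvalue λ of g (a root of P in the algebraic closure) whose eigenspace has dimension greater than δn. -/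
open Polynomial Module Submodule DirectSum

section Gen
variable {K V : Type*} [Field K] [AddCommGroup V] [Module K V] [FiniteDimensional K V]

lemma aux_gen (N : Module.End K V) (hnil : ∃ e, N ^ e = 0) (M : ℕ)
    (hM : Module.finrank K (LinearMap.ker N) ≤ M) :
    ∃ u : Fin M → V, (⊤ : Submodule K V) ≤
      Submodule.span K {x | ∃ i, ∃ j : ℕ, x = (N ^ j) (u i)} := by
  classical
  obtain ⟨e, he⟩ := hnil
  have hq : Module.finrank K (V ⧸ (LinearMap.range N)) ≤ M := by
    have h1 := Submodule.finrank_quotient_add_finrank (LinearMap.range N)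
    have h2 := LinearMap.finrank_range_add_finrank_ker N
    omega
  obtain ⟨w, hw⟩ : ∃ w : Fin M → V ⧸ (LinearMap.range N), Submodule.span K (Set.range w) = ⊤ := by
    set m := Module.finrank K (V ⧸ (LinearMap.range N)) with hm
    let b := Module.finBasis K (V ⧸ (LinearMap.range N))
    refine ⟨fun i => if h : (i : ℕ) < m then b ⟨i, h⟩ else 0, ?_⟩
    rw [eq_top_iff, ← b.span_eq]
    refine Submodule.span_le.2 ?_
    rintro - ⟨i, rfl⟩
    apply Submodule.subset_span
    refine ⟨⟨(i : ℕ), lt_of_lt_of_le i.2 hq⟩, ?_⟩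
    simp [show (i : ℕ) < m from i.2]
  choose u hu using fun i => Submodule.mkQ_surjective (LinearMap.range N) (w i)
  set S := Submodule.span K {x | ∃ i, ∃ j : ℕ, x = (N ^ j) (u i)} with hS
  have hS1 : Submodule.map N S ≤ S := by
    rw [hS, Submodule.map_span_le]
    rintro - ⟨i, j, rfl⟩
    apply Submodule.subset_span
    exact ⟨i, j + 1, by rw [pow_succ']; rfl⟩
  have hSk : ∀ k : ℕ, Submodule.map (N ^ k) S ≤ S := by
    intro k
    induction k with
    | zero => rw [pow_zero, Module.End.one_eq_id, Submodule.map_id]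
    | succ k ih =>
      rw [pow_succ', Module.End.mul_eq_comp, Submodule.map_comp]
      exact le_trans (Submodule.map_mono ih) hS1
  have hS2 : (⊤ : Submodule K V) ≤ S ⊔ (LinearMap.range N) := by
    intro x _
    have hx : (LinearMap.range N).mkQ x ∈ Submodule.map (LinearMap.range N).mkQ S := by
      have h1 : Submodule.span K (Set.range w) ≤ Submodule.map (LinearMap.range N).mkQ S := by
        refine Submodule.span_le.2 ?_
        rintro - ⟨i, rfl⟩
        exact ⟨u i, Submodule.subset_span ⟨i, 0, by simp⟩, hu i⟩
      rw [hw] at h1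
      exact h1 trivial
    obtain ⟨s, hs, hsx⟩ := hx
    refine Submodule.mem_sup.2 ⟨s, hs, x - s, ?_, by abel⟩
    rw [← Submodule.ker_mkQ (LinearMap.range N), LinearMap.mem_ker, map_sub, hsx, sub_self]
  have hfin : ∀ k : ℕ, (⊤ : Submodule K V) ≤ S ⊔ Submodule.map (N ^ k) ⊤ := by
    intro k
    induction k with
    | zero =>
      rw [pow_zero, Module.End.one_eq_id, Submodule.map_id]
      exact le_sup_right
    | succ k ih =>
      refine le_trans ih (sup_le le_sup_left ?_)
      have : Submodule.map (N ^ k) ⊤ ≤ Submodule.map (N ^ k) (S ⊔ (LinearMap.range N)) :=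
        Submodule.map_mono (le_trans le_top hS2)
      refine le_trans this ?_
      rw [Submodule.map_sup]
      refine sup_le (le_trans (hSk k) le_sup_left) ?_
      have : Submodule.map (N ^ k) (LinearMap.range N) ≤ Submodule.map (N ^ (k + 1)) ⊤ := by
        rw [LinearMap.range_eq_map, ← Submodule.map_comp, pow_succ, Module.End.mul_eq_comp]
      exact le_trans this le_sup_right
  refine ⟨u, ?_⟩
  have := hfin e
  rwa [he, Submodule.map_zero, sup_bot_eq] at this

end Gen

section Gen
variable {K V : Type*} [Field K] [AddCommGroup V] [Module K V] [FiniteDimensional K V]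

lemma aux_gen_sub (N : Module.End K V) (W : Submodule K V)
    (hWinv : ∀ x ∈ W, N x ∈ W)
    (e : ℕ) (hWnil : ∀ x ∈ W, (N ^ e) x = 0)
    (M : ℕ) (hM : Module.finrank K (LinearMap.ker N) ≤ M) :
    ∃ u : Fin M → V, (∀ i, u i ∈ W) ∧
      W ≤ Submodule.span K {x | ∃ i, ∃ j : ℕ, x = (N ^ j) (u i)} := by
  classical
  set N' : Module.End K W := N.restrict hWinv with hN'
  have hnil : N' ^ e = 0 := by
    rw [hN', Module.End.pow_restrict]
    ext x
    rw [LinearMap.restrict_coe_apply]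
    simpa using hWnil x.1 x.2
  have hker : Module.finrank K (LinearMap.ker N') ≤ M := by
    refine le_trans ?_ hM
    have hmem : ∀ x : LinearMap.ker N', (((x : W) : V)) ∈ LinearMap.ker N := by
      rintro ⟨x, hx⟩
      rw [LinearMap.mem_ker] at hx ⊢
      have := congrArg (Subtype.val) hx
      simpa [hN'] using this
    let φ : LinearMap.ker N' →ₗ[K] LinearMap.ker N :=
      LinearMap.codRestrict (LinearMap.ker N)
        (W.subtype.comp (Submodule.subtype (LinearMap.ker N'))) hmem
    have hinj : Function.Injective φ := by
      intro a b hab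
      have h1 : (φ a).val = (φ b).val := congrArg Subtype.val hab
      have h2 : ((a : W) : V) = ((b : W) : V) := h1
      exact Subtype.ext (Subtype.ext h2)
    exact LinearMap.finrank_le_finrank_of_injective hinj
  obtain ⟨u', hu'⟩ := aux_gen N' ⟨e, hnil⟩ M hker
  refine ⟨fun i => ((u' i : W) : V), fun i => (u' i).2, ?_⟩
  intro x hx
  have hx2 : (⟨x, hx⟩ : W) ∈ Submodule.span K {y : W | ∃ i, ∃ j : ℕ, y = (N' ^ j) (u' i)} :=
    hu' trivial
  have := Submodule.mem_map_of_mem (f := W.subtype) hx2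
  rw [Submodule.map_span] at this
  refine Submodule.span_mono ?_ this
  rintro - ⟨y, ⟨i, j, rfl⟩, rfl⟩
  refine ⟨i, j, ?_⟩
  rw [hN', Module.End.pow_restrict]
  simp

end Gen

lemma commutant_finrank_le {K V : Type*} [Field K] [IsAlgClosed K] [AddCommGroup V] [Module K V]
    [FiniteDimensional K V] (f : Module.End K V) (M : ℕ)
    (hM : ∀ μ : K, Module.finrank K (f.eigenspace μ) ≤ M) :
    Module.finrank K (LinearMap.ker (LinearMap.mulLeft K f - LinearMap.mulRight K f)) ≤
      M * Module.finrank K V := by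
  classical
  set C := LinearMap.ker (LinearMap.mulLeft K f - LinearMap.mulRight K f) with hC
  have hCmem : ∀ X : Module.End K V, X ∈ C ↔ f * X = X * f := by
    intro X
    rw [hC, LinearMap.mem_ker, LinearMap.sub_apply, LinearMap.mulLeft_apply,
      LinearMap.mulRight_apply, sub_eq_zero]
  set d := Module.finrank K V with hd
  set W : K → Submodule K V := fun μ => f.maxGenEigenspace μ with hW
  have htop : ⨆ μ, W μ = ⊤ := f.iSup_maxGenEigenspace_eq_top
  have hind : iSupIndep W := f.independent_maxGenEigenspace
  have hWker : ∀ μ, W μ = LinearMap.ker ((f - μ • 1) ^ d) := by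
    intro μ
    rw [hW]
    simp only
    rw [f.maxGenEigenspace_eq_genEigenspace_finrank, Module.End.genEigenspace_nat]
  -- generators for each W μ
  have hgen : ∀ μ : K, ∃ u : Fin M → V, (∀ i, u i ∈ W μ) ∧
      W μ ≤ Submodule.span K
        {x | ∃ i, ∃ j : ℕ, x = ((((f - μ • 1) : Module.End K V)) ^ j) (u i)} := by
    intro μ
    refine aux_gen_sub (f - μ • 1) (W μ) ?_ d ?_ M ?_
    · intro x hx
      rw [hWker μ, LinearMap.mem_ker] at hx ⊢
      rw [← Module.End.mul_apply, ← pow_succ, pow_succ', Module.End.mul_apply, hx, map_zero]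
    · intro x hx
      rw [hWker μ, LinearMap.mem_ker] at hx
      exact hx
    · have := hM μ
      rwa [Module.End.eigenspace_def] at this
  choose u hu1 hu2 using hgen
  -- finite support
  have hfin : {μ : K | W μ ≠ ⊥}.Finite := WellFoundedGT.finite_ne_bot_of_iSupIndep hind
  set s : Finset K := hfin.toFinset with hs
  have hsbot : ∀ μ ∉ s, W μ = ⊥ := by
    intro μ hμ
    by_contra h
    exact hμ (by rwa [hs, Set.Finite.mem_toFinset])
  have hstop : ⨆ μ : s, W μ = ⊤ := by
    rw [← htop]
    apply le_antisymm
    · exact iSup_le fun μ => le_iSup W μ.1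
    · refine iSup_le fun μ => ?_
      by_cases h : μ ∈ s
      · exact le_iSup (fun ν : s => W ν) (⟨μ, h⟩ : s)
      · rw [hsbot μ h]; exact bot_le
  have hindS : iSupIndep (fun μ : s => W μ.1) := hind.comp Subtype.val_injective
  have hinternal := DirectSum.isInternal_submodule_of_iSupIndep_of_iSup_eq_top hindS hstop
  have hsum : ∑ μ : s, Module.finrank K (W μ.1) = d := by
    classical
    have e1 : (⨁ (μ : s), ↥(W μ.1)) ≃ₗ[K] V :=
      LinearEquiv.ofBijective (DirectSum.coeLinearMap fun μ : s => W μ.1) hinternal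
    have := e1.finrank_eq
    rw [Module.finrank_directSum] at this
    rw [this, hd]
  -- the injection into Π μ : s, Fin M → W μ
  have hpres : ∀ X : C, ∀ μ : K, ∀ i, (X : Module.End K V) (u μ i) ∈ W μ := by
    rintro ⟨X, hX⟩ μ i
    rw [hCmem] at hX
    have hcomm : ((f - μ • 1) ^ d) * X = X * ((f - μ • 1) ^ d) := by
      have h1 : Commute (f - μ • 1) X := by
        refine Commute.sub_left hX ?_
        have : Commute (1 : Module.End K V) X := Commute.one_left X
        exact this.smul_left μ
      exact (h1.pow_left d)
    have := hu1 μ i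
    rw [hWker μ, LinearMap.mem_ker] at this ⊢
    calc ((f - μ • 1) ^ d) (X (u μ i)) = (((f - μ • 1) ^ d) * X) (u μ i) := rfl
      _ = (X * ((f - μ • 1) ^ d)) (u μ i) := by rw [hcomm]
      _ = X (((f - μ • 1) ^ d) (u μ i)) := rfl
      _ = 0 := by rw [this, map_zero]
  let Φ : C →ₗ[K] (∀ μ : s, Fin M → W μ.1) :=
    { toFun := fun X => fun μ i => ⟨(X : Module.End K V) (u μ.1 i), hpres X μ.1 i⟩
      map_add' := by
        intro X Y
        funext μ i
        exact Subtype.ext (by simp)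
      map_smul' := by
        intro c X
        funext μ i
        exact Subtype.ext (by simp) }
  have hΦinj : Function.Injective Φ := by
    rw [← LinearMap.ker_eq_bot]
    rw [eq_bot_iff]
    rintro X hX
    rw [LinearMap.mem_ker] at hX
    have hz : ∀ μ ∈ s, ∀ i, (X : Module.End K V) (u μ i) = 0 := by
      intro μ hμ i
      have := congrFun (congrFun hX ⟨μ, hμ⟩) i
      exact Subtype.ext_iff.1 this
    have hker : ∀ μ : K, W μ ≤ LinearMap.ker (X : Module.End K V) := by
      intro μ
      by_cases h : μ ∈ s
      · refine le_trans (hu2 μ) (Submodule.span_le.2 ?_)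
        rintro - ⟨i, j, rfl⟩
        rw [SetLike.mem_coe, LinearMap.mem_ker]
        have hcomm : ((f - μ • 1) ^ j) * (X : Module.End K V)
            = (X : Module.End K V) * ((f - μ • 1) ^ j) := by
          have hX2 := X.2
          rw [hCmem] at hX2
          have h1 : Commute (f - μ • 1) (X : Module.End K V) :=
            Commute.sub_left hX2 ((Commute.one_left _).smul_left μ)
          exact h1.pow_left j
        calc (X : Module.End K V) (((f - μ • 1) ^ j) (u μ i))
            = ((X : Module.End K V) * ((f - μ • 1) ^ j)) (u μ i) := rfl
          _ = (((f - μ • 1) ^ j) * (X : Module.End K V)) (u μ i) := by rw [hcomm]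
          _ = ((f - μ • 1) ^ j) ((X : Module.End K V) (u μ i)) := rfl
          _ = 0 := by rw [hz μ h i, map_zero]
      · rw [hsbot μ h]; exact bot_le
    have : (⊤ : Submodule K V) ≤ LinearMap.ker (X : Module.End K V) := by
      rw [← htop]; exact iSup_le hker
    have hX0 : (X : Module.End K V) = 0 := by
      rw [← LinearMap.ker_eq_top, eq_top_iff]; exact this
    rw [Submodule.mem_bot]
    exact Subtype.ext hX0
  have hle := LinearMap.finrank_le_finrank_of_injective hΦinj
  refine le_trans hle ?_
  rw [Module.finrank_pi_fintype]
  have h2 : ∀ μ : s, Module.finrank K (Fin M → W μ.1) = M * Module.finrank K (W μ.1) := by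
    intro μ
    rw [Module.finrank_pi_fintype]
    simp [Finset.sum_const, Finset.card_univ, mul_comm]
  rw [Finset.sum_congr rfl fun μ _ => h2 μ, ← Finset.mul_sum, hsum]

lemma span_map_finrank_le {F K : Type*} [Field F] [Field K] [Algebra F K]
    {n : Type*} [Fintype n] [DecidableEq n]
    {ι : Type*} [Fintype ι] (t : ι → Matrix n n F) :
    Module.finrank K (Submodule.span K (Set.range fun p => (t p).map (algebraMap F K))) ≤
      Module.finrank F (Submodule.span F (Set.range t)) := by
  classical
  haveI : FiniteDimensional F (Submodule.span F (Set.range t)) :=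
    FiniteDimensional.span_of_finite F (Set.finite_range t)
  set r := Module.finrank F (Submodule.span F (Set.range t)) with hr
  let c := Module.finBasis F (Submodule.span F (Set.range t))
  let c' : Fin r → Matrix n n F := fun i => ((c i : Submodule.span F (Set.range t)) : Matrix n n F)
  have h1 : Submodule.span F (Set.range c') = Submodule.span F (Set.range t) := by
    have : Set.range c' = (Submodule.span F (Set.range t)).subtype '' Set.range c := by
      rw [← Set.range_comp]; rfl
    rw [this, ← Submodule.map_span, c.span_eq, Submodule.map_subtype_top]
  have hmem : ∀ p, t p ∈ Submodule.span F (Set.range c') := by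
    intro p
    rw [h1]
    exact Submodule.subset_span ⟨p, rfl⟩
  have key : ∀ x ∈ Submodule.span F (Set.range c'),
      (x.map (algebraMap F K)) ∈
        Submodule.span K (Set.range fun i => (c' i).map (algebraMap F K)) := by
    intro x hx
    induction hx using Submodule.span_induction with
    | mem y hy =>
      obtain ⟨i, rfl⟩ := hy
      exact Submodule.subset_span ⟨i, rfl⟩
    | zero =>
      have : (0 : Matrix n n F).map (algebraMap F K) = 0 := by
        ext i j; simp
      rw [this]; exact Submodule.zero_mem _
    | add y z _ _ ihy ihz =>
      have : (y + z).map (algebraMap F K) = y.map (algebraMap F K) + z.map (algebraMap F K) := by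
        ext i j; simp
      rw [this]; exact Submodule.add_mem _ ihy ihz
    | smul a y _ ihy =>
      have : (a • y).map (algebraMap F K) = (algebraMap F K a) • y.map (algebraMap F K) := by
        ext i j; simp [Matrix.map_apply, Matrix.smul_apply, smul_eq_mul, map_mul]
      rw [this]; exact Submodule.smul_mem _ _ ihy
  have hle : Submodule.span K (Set.range fun p => (t p).map (algebraMap F K)) ≤
      Submodule.span K (Set.range fun i => (c' i).map (algebraMap F K)) := by
    refine Submodule.span_le.2 ?_
    rintro - ⟨p, rfl⟩
    exact key (t p) (hmem p)
  refine le_trans (Submodule.finrank_mono hle) ?_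
  simpa [Set.finrank] using finrank_range_le_card (R := K) (fun i => (c' i).map (algebraMap F K))

lemma range_eq_span_ad (R : Type*) [Field R] {n : Type*} [Fintype n] [DecidableEq n]
    (B : Matrix n n R →ₗ[R] Matrix n n R) :
    LinearMap.range B = Submodule.span R
      (Set.range fun p : n × n => B (Matrix.single p.1 p.2 1)) := by
  have htop : (⊤ : Submodule R (Matrix n n R)) =
      Submodule.span R (Set.range fun p : n × n => Matrix.single p.1 p.2 (1 : R)) := by
    refine le_antisymm ?_ le_top
    intro x _
    rw [Matrix.matrix_eq_sum_single x]
    refine Submodule.sum_mem _ fun i _ => Submodule.sum_mem _ fun j _ => ?_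
    have : Matrix.single i j (x i j) = x i j • Matrix.single i j (1 : R) := by
      ext a b
      simp [Matrix.single, Matrix.smul_apply, mul_ite]
    rw [this]
    exact Submodule.smul_mem _ _ (Submodule.subset_span ⟨(i, j), rfl⟩)
  rw [LinearMap.range_eq_map, htop, Submodule.map_span, ← Set.range_comp]
  rfl

lemma ker_ad_finrank_le {F K : Type*} [Field F] [Field K] [Algebra F K]
    {n : Type*} [Fintype n] [DecidableEq n] (A : Matrix n n F) :
    Module.finrank F (LinearMap.ker (LinearMap.mulLeft F A - LinearMap.mulRight F A)) ≤
      Module.finrank K (LinearMap.ker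
        (LinearMap.mulLeft K (A.map (algebraMap F K)) -
         LinearMap.mulRight K (A.map (algebraMap F K)))) := by
  classical
  set φ := algebraMap F K with hφ
  set adF : Matrix n n F →ₗ[F] Matrix n n F :=
    LinearMap.mulLeft F A - LinearMap.mulRight F A with hadF
  set adK : Matrix n n K →ₗ[K] Matrix n n K :=
    LinearMap.mulLeft K (A.map φ) - LinearMap.mulRight K (A.map φ) with hadK
  have hF := LinearMap.finrank_range_add_finrank_ker adF
  have hK := LinearMap.finrank_range_add_finrank_ker adK
  rw [Module.finrank_matrix] at hF hK
  simp only [Module.finrank_self, mul_one] at hF hK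
  -- spanning by std basis matrices
  have hcomm : ∀ p : n × n,
      adK (Matrix.single p.1 p.2 (1 : K)) =
        (adF (Matrix.single p.1 p.2 (1 : F))).map φ := by
    intro p
    have hE : (Matrix.single p.1 p.2 (1 : F)).map φ
        = Matrix.single p.1 p.2 (1 : K) := by
      ext a b
      simp [Matrix.single, Matrix.map_apply, apply_ite φ]
    rw [hadK, hadF, ← hE]
    simp only [LinearMap.sub_apply, LinearMap.mulLeft_apply, LinearMap.mulRight_apply]
    rw [Matrix.map_sub _ (map_sub φ), Matrix.map_mul, Matrix.map_mul]
  have hrange : Module.finrank K (LinearMap.range adK) ≤ Module.finrank F (LinearMap.range adF) := by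
    rw [range_eq_span_ad F adF, range_eq_span_ad K adK]
    have : (fun p : n × n => adK (Matrix.single p.1 p.2 1)) =
        fun p : n × n => ((fun q : n × n => adF (Matrix.single q.1 q.2 1)) p).map φ := by
      funext p; exact hcomm p
    rw [this]
    exact span_map_finrank_le _
  omega

-- transfer from matrix commutant to End commutant
lemma ker_ad_eq_finrank_commutant {K : Type*} [Field K] {n : ℕ} (B : Matrix (Fin n) (Fin n) K) :
    Module.finrank K (LinearMap.ker (LinearMap.mulLeft K B - LinearMap.mulRight K B)) =
      Module.finrank K (LinearMap.ker
        (LinearMap.mulLeft K (Matrix.mulVecLin B) - LinearMap.mulRight K (Matrix.mulVecLin B))) := by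
  classical
  set e := (Matrix.toLin' : Matrix (Fin n) (Fin n) K ≃ₗ[K] ((Fin n → K) →ₗ[K] (Fin n → K)))
  have hmap : Submodule.map (e : Matrix (Fin n) (Fin n) K ≃ₗ[K] _).toLinearMap
      (LinearMap.ker (LinearMap.mulLeft K B - LinearMap.mulRight K B)) =
      LinearMap.ker (LinearMap.mulLeft K (Matrix.mulVecLin B) -
        LinearMap.mulRight K (Matrix.mulVecLin B)) := by
    ext Y
    rw [Submodule.mem_map]
    constructor
    · rintro ⟨X, hX, rfl⟩
      rw [LinearMap.mem_ker, LinearMap.sub_apply, LinearMap.mulLeft_apply,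
        LinearMap.mulRight_apply, sub_eq_zero] at hX ⊢
      have : Matrix.mulVecLin B = e B := (Matrix.toLin'_apply' B).symm
      rw [this]
      show e B * e X = e X * e B
      rw [Module.End.mul_eq_comp, Module.End.mul_eq_comp, ← Matrix.toLin'_mul, ← Matrix.toLin'_mul]
      exact congrArg e hX
    · intro hY
      refine ⟨e.symm Y, ?_, by simp⟩
      rw [LinearMap.mem_ker, LinearMap.sub_apply, LinearMap.mulLeft_apply,
        LinearMap.mulRight_apply, sub_eq_zero] at hY ⊢
      have h1 : Matrix.mulVecLin B = e B := (Matrix.toLin'_apply' B).symm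
      rw [h1] at hY
      apply e.injective
      have h2 : e (B * e.symm Y) = e B * Y := by
        rw [Matrix.toLin'_mul]
        show (e B) ∘ₗ (e (e.symm Y)) = _
        rw [e.apply_symm_apply, Module.End.mul_eq_comp]
      have h3 : e (e.symm Y * B) = Y * e B := by
        rw [Matrix.toLin'_mul]
        show (e (e.symm Y)) ∘ₗ (e B) = _
        rw [e.apply_symm_apply, Module.End.mul_eq_comp]
      rw [h2, h3, hY]
  rw [← hmap, LinearEquiv.finrank_map_eq]

theorem stmt10 (F : Type*) [Field F] [Fintype F] (n : ℕ) (g : GL (Fin n) F)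
    (δ : ℝ) (hδ : 0 < δ)
    (hcent : ((Fintype.card F : ℝ)) ^ (2 * δ * (n : ℝ) ^ 2) <
      (Nat.card (Subgroup.centralizer ({g} : Set (GL (Fin n) F))) : ℝ)) :
    ∃ P : Polynomial F, P.Monic ∧ Irreducible P ∧
      ∃ lam : AlgebraicClosure F, (Polynomial.aeval lam) P = 0 ∧
        δ * (n : ℝ) <
          (Module.finrank (AlgebraicClosure F)
            (Module.End.eigenspace
              (Matrix.mulVecLin
                ((g : Matrix (Fin n) (Fin n) F).map (algebraMap F (AlgebraicClosure F))))
              lam) : ℝ) := by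
  classical
  by_contra hcon
  push_neg at hcon
  set K := AlgebraicClosure F with hK
  set A : Matrix (Fin n) (Fin n) F := (g : Matrix (Fin n) (Fin n) F) with hA
  set Abar := A.map (algebraMap F K) with hAbar
  set M : ℕ := ⌊δ * (n : ℝ)⌋₊ with hMdef
  have hM : ∀ μ : K, Module.finrank K (Module.End.eigenspace (Matrix.mulVecLin Abar) μ) ≤ M := by
    intro μ
    have hint : IsIntegral F μ := Algebra.IsIntegral.isIntegral μ
    have := hcon (minpoly F μ) (minpoly.monic hint) (minpoly.irreducible hint) μ
      (minpoly.aeval F μ)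
    exact Nat.le_floor this
  -- dimension bound over K
  have hdimK : Module.finrank K (LinearMap.ker
      (LinearMap.mulLeft K (Matrix.mulVecLin Abar) - LinearMap.mulRight K (Matrix.mulVecLin Abar)))
      ≤ M * n := by
    have := commutant_finrank_le (Matrix.mulVecLin Abar) M hM
    rwa [Module.finrank_pi, Fintype.card_fin] at this
  have hdimF : Module.finrank F (LinearMap.ker
      (LinearMap.mulLeft F A - LinearMap.mulRight F A)) ≤ M * n := by
    refine le_trans (ker_ad_finrank_le (K := K) A) ?_
    rw [ker_ad_eq_finrank_commutant]
    exact hdimK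
  set CF := LinearMap.ker (LinearMap.mulLeft F A - LinearMap.mulRight F A) with hCF
  -- counting
  have hcard : Nat.card (Subgroup.centralizer ({g} : Set (GL (Fin n) F))) ≤
      Fintype.card F ^ Module.finrank F CF := by
    have hinj : ∃ J : ↥(Subgroup.centralizer ({g} : Set (GL (Fin n) F))) → ↥CF,
        Function.Injective J := by
      refine ⟨fun h => ⟨((h.1 : GL (Fin n) F) : Matrix (Fin n) (Fin n) F), ?_⟩, ?_⟩
      · have hmem := h.2
        rw [Subgroup.mem_centralizer_iff] at hmem
        have := hmem g (by simp)
        have hval := congrArg Units.val this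
        rw [hCF, LinearMap.mem_ker, LinearMap.sub_apply, LinearMap.mulLeft_apply,
          LinearMap.mulRight_apply, sub_eq_zero]
        simpa [Units.val_mul] using hval
      · intro a b hab
        have h1 : ((a.1 : GL (Fin n) F) : Matrix (Fin n) (Fin n) F) =
            ((b.1 : GL (Fin n) F) : Matrix (Fin n) (Fin n) F) := congrArg Subtype.val hab
        exact Subtype.ext (Units.ext h1)
    obtain ⟨J, hJ⟩ := hinj
    haveI : Fintype ↥CF := Fintype.ofFinite _
    calc Nat.card (Subgroup.centralizer ({g} : Set (GL (Fin n) F)))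
        ≤ Nat.card ↥CF := Nat.card_le_card_of_injective J hJ
      _ = Fintype.card ↥CF := Nat.card_eq_fintype_card
      _ = Fintype.card F ^ Module.finrank F CF := card_eq_pow_finrank
  -- numerics
  have hq1 : (1 : ℝ) ≤ (Fintype.card F : ℝ) := by
    have := Fintype.card_pos (α := F)
    exact_mod_cast this
  have hexp : (Module.finrank F CF : ℝ) ≤ 2 * δ * (n : ℝ) ^ 2 := by
    have h1 : (Module.finrank F CF : ℝ) ≤ (M : ℝ) * n := by
      exact_mod_cast hdimF
    have h2 : (M : ℝ) ≤ δ * n := Nat.floor_le (by positivity)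
    have h3 : (0 : ℝ) ≤ δ * n * n := by positivity
    nlinarith [h3, mul_le_mul_of_nonneg_right h2 (by positivity : (0:ℝ) ≤ (n:ℝ))]
  have hle : (Nat.card (Subgroup.centralizer ({g} : Set (GL (Fin n) F))) : ℝ) ≤
      (Fintype.card F : ℝ) ^ (2 * δ * (n : ℝ) ^ 2) := by
    calc (Nat.card (Subgroup.centralizer ({g} : Set (GL (Fin n) F))) : ℝ)
        ≤ ((Fintype.card F ^ Module.finrank F CF : ℕ) : ℝ) := by exact_mod_cast hcard
      _ = (Fintype.card F : ℝ) ^ ((Module.finrank F CF : ℕ) : ℝ) := by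
          rw [Nat.cast_pow, Real.rpow_natCast]
      _ ≤ (Fintype.card F : ℝ) ^ (2 * δ * (n : ℝ) ^ 2) :=
          Real.rpow_le_rpow_of_exponent_le hq1 hexp
  exact absurd hcent (not_lt.2 hle)
end

section
/- Let h_1 > h_2 > ... > h_t ≥ 1 be odd positive integers. Then the product h_1 h_2 ··· h_t < 37 · 2^{(h_1 + h_2 + ... + h_t)/4}. -/
open Real Finset

lemma pow4_le (n : ℕ) (hn : 17 ≤ n) : n ^ 4 ≤ 2 ^ n := by
  induction n with
  | zero => omega
  | succ m ih =>
    rcases Nat.lt_or_ge m 17 with hm | hm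
    · have hm16 : m = 16 := by omega
      subst hm16; norm_num
    · have h1 := ih (by omega)
      have h3 : 17 * m ^ 3 ≤ m ^ 4 := by
        have := Nat.mul_le_mul_right (m ^ 3) hm
        calc 17 * m ^ 3 ≤ m * m ^ 3 := this
          _ = m ^ 4 := by ring
      have h2 : (m + 1) ^ 4 ≤ 2 * m ^ 4 := by nlinarith
      calc (m + 1) ^ 4 ≤ 2 * m ^ 4 := h2
        _ ≤ 2 * 2 ^ m := by omega
        _ = 2 ^ (m + 1) := by ring

lemma rpow4_eq (n : ℕ) : ((2:ℝ) ^ ((n:ℝ)/4)) ^ 4 = (2:ℝ) ^ n := by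
  rw [← rpow_natCast ((2:ℝ) ^ ((n:ℝ)/4)) 4, ← rpow_mul (by norm_num : (0:ℝ) ≤ 2)]
  push_cast
  rw [div_mul_cancel₀ _ (by norm_num : (4:ℝ) ≠ 0), rpow_natCast]

lemma f_le_one (n : ℕ) (hn : 1 ≤ n) (h17 : n = 1 ∨ 17 ≤ n) :
    (n : ℝ) / (2 : ℝ) ^ ((n : ℝ) / 4) ≤ 1 := by
  have hg : (0:ℝ) < (2:ℝ) ^ ((n:ℝ)/4) := rpow_pos_of_pos (by norm_num) _
  rw [div_le_one hg]
  have key : (n:ℝ)^4 ≤ ((2:ℝ) ^ ((n:ℝ)/4))^4 := by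
    rw [rpow4_eq]
    rcases h17 with h1 | h1
    · subst h1; norm_num
    · have := pow4_le n h1
      calc ((n:ℝ))^4 = ((n^4 : ℕ) : ℝ) := by push_cast; ring
        _ ≤ ((2^n : ℕ) : ℝ) := by exact_mod_cast this
        _ = (2:ℝ)^n := by push_cast; ring
  exact le_of_pow_le_pow_left₀ (by norm_num) (le_of_lt hg) key

lemma one_le_f (n : ℕ) (hn : 2 ^ n ≤ n ^ 4) :
    1 ≤ (n : ℝ) / (2 : ℝ) ^ ((n : ℝ) / 4) := by
  have hg : (0:ℝ) < (2:ℝ) ^ ((n:ℝ)/4) := rpow_pos_of_pos (by norm_num) _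
  rw [le_div_iff₀ hg, one_mul]
  have key : ((2:ℝ) ^ ((n:ℝ)/4))^4 ≤ (n:ℝ)^4 := by
    rw [rpow4_eq]
    calc (2:ℝ)^n = ((2^n : ℕ) : ℝ) := by push_cast; ring
      _ ≤ ((n^4 : ℕ) : ℝ) := by exact_mod_cast hn
      _ = ((n:ℝ))^4 := by push_cast; ring
  exact le_of_pow_le_pow_left₀ (by norm_num) (Nat.cast_nonneg n) key

theorem stmt12 (t : ℕ) (h : Fin t → ℕ) (hdec : StrictAnti h)
    (hodd : ∀ i, Odd (h i)) (hpos : ∀ i, 1 ≤ h i) :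
    (∏ i, (h i : ℝ)) < 37 * (2 : ℝ) ^ ((∑ i, (h i : ℝ)) / 4) := by
  set f : ℕ → ℝ := fun n => (n : ℝ) / (2 : ℝ) ^ ((n : ℝ) / 4) with hf
  have hg : ∀ n : ℕ, (0:ℝ) < (2:ℝ) ^ ((n:ℝ)/4) := fun n => rpow_pos_of_pos (by norm_num) _
  have hfpos : ∀ n : ℕ, 1 ≤ n → 0 < f n := fun n hn =>
    div_pos (by exact_mod_cast hn) (hg n)
  have hsplit : (2 : ℝ) ^ ((∑ i, (h i : ℝ)) / 4) = ∏ i, (2:ℝ) ^ ((h i : ℝ)/4) := by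
    rw [Finset.sum_div, Real.rpow_sum_of_pos (by norm_num)]
  have hprod : (∏ i, (h i : ℝ)) = (∏ i, f (h i)) * (2 : ℝ) ^ ((∑ i, (h i : ℝ)) / 4) := by
    rw [hsplit, ← Finset.prod_mul_distrib]
    refine Finset.prod_congr rfl fun i _ => ?_
    rw [hf]
    field_simp
  rw [hprod]
  have hpow : (0:ℝ) < (2 : ℝ) ^ ((∑ i, (h i : ℝ)) / 4) := by
    rw [hsplit]; exact Finset.prod_pos (fun i _ => hg _)
  rw [mul_lt_mul_iff_of_pos_right hpow]
  -- goal : ∏ i, f (h i) < 37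
  set B : Finset ℕ := {3,5,7,9,11,13,15} with hB
  set A : Finset (Fin t) := Finset.univ.filter (fun i => h i ∈ B) with hA
  have hdist : ∏ i, f (h i) = (∏ i ∈ A, f (h i)) * ∏ i ∈ Aᶜ, f (h i) :=
    (Finset.prod_mul_prod_compl A _).symm
  have hcompl : ∏ i ∈ Aᶜ, f (h i) ≤ 1 := by
    apply Finset.prod_le_one
    · exact fun i _ => (hfpos _ (hpos i)).le
    · intro i hi
      apply f_le_one _ (hpos i)
      have hni : h i ∉ B := by
        simp only [hA, Finset.mem_compl, Finset.mem_filter, Finset.mem_univ, true_and] at hi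
        exact hi
      simp only [hB, Finset.mem_insert, Finset.mem_singleton] at hni
      obtain ⟨k, hk⟩ := hodd i
      have := hpos i
      omega
  have hAprod : ∏ i ∈ A, f (h i) = ∏ n ∈ A.image h, f n :=
    (Finset.prod_image (fun i _ j _ hij => hdec.injective hij)).symm
  have himg : A.image h ⊆ B := by
    intro n hn
    simp only [Finset.mem_image, hA, Finset.mem_filter, Finset.mem_univ, true_and] at hn
    obtain ⟨i, hi, rfl⟩ := hn
    exact hi
  have hBf : ∀ n ∈ B, 1 ≤ f n := by
    intro n hn
    fin_cases hn <;> exact one_le_f _ (by norm_num)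
  have hone : (1:ℝ) ≤ ∏ n ∈ B \ A.image h, f n := by
    have := Finset.prod_le_prod (s := B \ A.image h) (f := fun _ => (1:ℝ)) (g := f)
      (fun i _ => zero_le_one) (fun i hi => hBf i (Finset.mem_sdiff.mp hi).1)
    simpa using this
  have hle : ∏ n ∈ A.image h, f n ≤ ∏ n ∈ B, f n := by
    rw [← Finset.prod_sdiff himg]
    exact le_mul_of_one_le_left
      (Finset.prod_nonneg fun n hn => le_trans zero_le_one (hBf n (himg hn))) hone
  have hBval : ∏ n ∈ B, f n < 37 := by
    have hBnum : (∏ n ∈ B, (n:ℝ)) = 2027025 := by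
      simp only [hB]
      norm_num
    have hBden : (∏ n ∈ B, (2:ℝ) ^ ((n:ℝ)/4)) = (2:ℝ) ^ ((63:ℝ)/4) := by
      rw [← Real.rpow_sum_of_pos (by norm_num : (0:ℝ) < 2)]
      congr 1
      simp only [hB]
      norm_num
    have : ∏ n ∈ B, f n = 2027025 / (2:ℝ) ^ ((63:ℝ)/4) := by
      rw [hf, Finset.prod_div_distrib, hBnum, hBden]
    rw [this, div_lt_iff₀ (rpow_pos_of_pos (by norm_num) _)]
    have h4 : ((2:ℝ) ^ ((63:ℝ)/4)) ^ 4 = 2 ^ (63:ℕ) := by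
      rw [← rpow_natCast ((2:ℝ) ^ ((63:ℝ)/4)) 4, ← rpow_mul (by norm_num : (0:ℝ) ≤ 2)]
      norm_num
    have hlt : (2027025:ℝ)^4 < (37 * (2:ℝ) ^ ((63:ℝ)/4))^4 := by
      rw [mul_pow, h4]
      norm_num
    exact lt_of_pow_lt_pow_left₀ 4 (by positivity) hlt
  calc ∏ i, f (h i) = (∏ i ∈ A, f (h i)) * ∏ i ∈ Aᶜ, f (h i) := hdist
    _ ≤ (∏ i ∈ A, f (h i)) * 1 := by
        apply mul_le_mul_of_nonneg_left hcompl
        exact Finset.prod_nonneg fun i _ => (hfpos _ (hpos i)).le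
    _ = ∏ n ∈ A.image h, f n := by rw [mul_one, hAprod]
    _ ≤ ∏ n ∈ B, f n := hle
    _ < 37 := hBval
end
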